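/- (First BRAIN theorem, finite form) Let α be an irrational real number and N a positive integer. Then there exists an integer q₀ with 1 ≤ q₀ ≤ N such that round(q₀·α) and q₀ are coprime and for all integers p and q with 1 ≤ q ≤ N, |α - (round (q₀·α))/q₀| ≤ |α - p/q|; that is, the best rational approximation of the first kind of α with denominator at most N is attained by an irreducible fraction of the form round(q₀·α)/q₀. -/

import Mathlib

/-- For positive `q`, the fraction `round (q*α) / q` is the nearest fraction with
denominator `q`. -/
lemma round_best (α : ℝ) (q : ℤ) (hq : 1 ≤ q) (p : ℤ) :
    |α - (round ((q : ℝ) * α) : ℝ) / (q : ℝ)| ≤ |α - (p : ℝ) / (q : ℝ)| := by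
  have hq0 : (0 : ℝ) < (q : ℝ) := by exact_mod_cast hq.trans_lt' (by norm_num)
  have h1 : α - (round ((q : ℝ) * α) : ℝ) / (q : ℝ)
      = ((q : ℝ) * α - (round ((q : ℝ) * α) : ℝ)) / (q : ℝ) := by
    field_simp
  have h2 : α - (p : ℝ) / (q : ℝ) = ((q : ℝ) * α - (p : ℝ)) / (q : ℝ) := by
    field_simp
  rw [h1, h2, abs_div, abs_div, abs_of_pos hq0]
  exact div_le_div_of_nonneg_right (round_le ((q : ℝ) * α) p) hq0.le

theorem first_brain_theorem (α : ℝ) (hα : Irrational α) (N : ℤ) (hN : 1 ≤ N) :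
    ∃ q₀ : ℤ, 1 ≤ q₀ ∧ q₀ ≤ N ∧ IsCoprime (round ((q₀ : ℝ) * α)) q₀ ∧
      ∀ p q : ℤ, 1 ≤ q → q ≤ N →
        |α - (round ((q₀ : ℝ) * α) : ℝ) / (q₀ : ℝ)| ≤ |α - (p : ℝ) / (q : ℝ)| := by
  classical
  set S : Finset ℤ := Finset.Icc 1 N with hS
  have hSne : S.Nonempty := ⟨1, by simp [hS, hN]⟩
  set f : ℤ → ℝ := fun q => |α - (round ((q : ℝ) * α) : ℝ) / (q : ℝ)| with hf
  obtain ⟨qm, hqmS, hqmmin⟩ := S.exists_min_image f hSne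
  set T : Finset ℤ := S.filter (fun q => ∀ r ∈ S, f q ≤ f r) with hT
  have hTne : T.Nonempty := ⟨qm, by simp only [hT, Finset.mem_filter]; exact ⟨hqmS, hqmmin⟩⟩
  set q₀ : ℤ := T.min' hTne with hq₀def
  have hq₀T : q₀ ∈ T := T.min'_mem hTne
  obtain ⟨hq₀S, hq₀min⟩ := Finset.mem_filter.mp hq₀T
  obtain ⟨hq₀1, hq₀N⟩ := Finset.mem_Icc.mp hq₀S
  refine ⟨q₀, hq₀1, hq₀N, ?_, ?_⟩
  · -- coprimality
    by_contra hcop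
    rw [Int.isCoprime_iff_gcd_eq_one] at hcop
    set d : ℤ := (Int.gcd (round ((q₀ : ℝ) * α)) q₀ : ℤ) with hd
    have hd0 : d ≠ 0 := by
      simp only [hd, ne_eq, Int.natCast_eq_zero, Int.gcd_eq_zero_iff, not_and]
      intro _ h; omega
    have hd1 : 1 ≤ d := by omega
    have hd2 : 2 ≤ d := by
      rcases lt_or_ge d 2 with h | h
      · exfalso; apply hcop; omega
      · exact h
    have hdvd2 : d ∣ q₀ := Int.gcd_dvd_right _ _
    have hdvd1 : d ∣ round ((q₀ : ℝ) * α) := Int.gcd_dvd_left _ _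
    obtain ⟨b, hb⟩ := hdvd2
    obtain ⟨a, ha⟩ := hdvd1
    have hb1 : 1 ≤ b := by nlinarith
    have hbq : b < q₀ := by nlinarith
    have hbS : b ∈ S := Finset.mem_Icc.mpr ⟨hb1, hbq.le.trans hq₀N⟩
    have hdR : (d : ℝ) ≠ 0 := by positivity
    have heq : (round ((q₀ : ℝ) * α) : ℝ) / (q₀ : ℝ) = (a : ℝ) / (b : ℝ) := by
      rw [ha, hb]
      push_cast
      rw [mul_div_mul_left _ _ hdR]
    have hfb : f b ≤ f q₀ := by
      have := round_best α b hb1 a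
      simp only [hf]
      rw [heq]
      exact this
    have hbT : b ∈ T := by
      rw [hT, Finset.mem_filter]
      exact ⟨hbS, fun r hr => hfb.trans (hq₀min r hr)⟩
    have := T.min'_le b hbT
    omega
  · intro p q hq1 hqN
    have hqS : q ∈ S := Finset.mem_Icc.mpr ⟨hq1, hqN⟩
    exact (hq₀min q hqS).trans (round_best α q hq1 p)
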